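/- e-closure bFDR control: let e_S (nonempty S ⊆ [m]) be nonnegative random variables with E[e_{H0}] ≤ 1 when H0 ≠ ∅. If a random nonempty rejection set R with least-significant index I(R) satisfies pointwise e_S ≥ 1/α for all S ∋ I(R), then P(I(R) ∈ H0) ≤ α. -/

import Mathlib

open MeasureTheory Finset

/-- e-closure bFDR control: if E[e_{H0}] ≤ 1 when H0 ≠ ∅, and on {R ≠ ∅} pointwise
e_S ≥ 1/α for all S containing the least significant rejected index I(R)
(with I(∅) = 0 ∉ H0), then P(I(R) ∈ H0) ≤ α. -/
theorem stmt15 {Ω : Type*} [MeasurableSpace Ω] (μ : Measure Ω) [IsProbabilityMeasure μ]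
    (m : ℕ) (H0 : Finset ℕ) (hH0sub : H0 ⊆ Finset.Icc 1 m) (h0 : 0 ∉ H0)
    (e : Finset ℕ → Ω → ℝ) (R : Ω → Finset ℕ) (I : Ω → ℕ)
    (α : ℝ) (hα : 0 < α) (hα1 : α ≤ 1)
    (hnonneg : ∀ S ω, 0 ≤ e S ω)
    (hint : H0.Nonempty → Integrable (e H0) μ)
    (hE : H0.Nonempty → ∫ ω, e H0 ω ∂μ ≤ 1)
    (hmeas : MeasurableSet {ω | I ω ∈ H0})
    (hIin : ∀ ω, (R ω).Nonempty → I ω ∈ R ω)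
    (hIempty : ∀ ω, R ω = ∅ → I ω = 0)
    (hcond : ∀ ω, (R ω).Nonempty → ∀ S : Finset ℕ, I ω ∈ S → 1/α ≤ e S ω) :
    μ {ω | I ω ∈ H0} ≤ ENNReal.ofReal α := by
  rcases H0.eq_empty_or_nonempty with hH0 | hH0
  · simp [hH0]
  have hne : μ {ω | I ω ∈ H0} ≠ ⊤ := measure_ne_top μ _
  rw [ENNReal.le_ofReal_iff_toReal_le hne hα.le]
  have hkey : ∀ ω, Set.indicator {ω | I ω ∈ H0} (fun _ => (1:ℝ)) ω ≤ α * e H0 ω := by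
    intro ω
    by_cases h : I ω ∈ H0
    · have hRne : (R ω).Nonempty := by
        rcases (R ω).eq_empty_or_nonempty with hR | hR
        · exact absurd (hIempty ω hR ▸ h) h0
        · exact hR
      have := hcond ω hRne H0 h
      rw [Set.indicator_of_mem (show ω ∈ {ω | I ω ∈ H0} from h)]
      calc (1:ℝ) = α * (1/α) := by field_simp
        _ ≤ α * e H0 ω := by
          exact mul_le_mul_of_nonneg_left this hα.le
    · rw [Set.indicator_of_notMem (show ω ∉ {ω | I ω ∈ H0} from h)]
      exact mul_nonneg hα.le (hnonneg H0 ω)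
  have h1 : (μ {ω | I ω ∈ H0}).toReal
      = ∫ ω, Set.indicator {ω | I ω ∈ H0} (fun _ => (1:ℝ)) ω ∂μ := by
    rw [MeasureTheory.integral_indicator hmeas]
    simp [Measure.real]
  rw [h1]
  calc ∫ ω, Set.indicator {ω | I ω ∈ H0} (fun _ => (1:ℝ)) ω ∂μ
      ≤ ∫ ω, α * e H0 ω ∂μ := by
        apply integral_mono _ ((hint hH0).const_mul α) hkey
        exact (integrable_indicator_iff hmeas).2 (integrableOn_const (measure_ne_top μ _))
    _ = α * ∫ ω, e H0 ω ∂μ := integral_const_mul α _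
    _ ≤ α * 1 := mul_le_mul_of_nonneg_left (hE hH0) hα.le
    _ = α := mul_one α
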